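/- There exists a constant c such that for all integers n, m ≥ 2, the directed grid on [n] × [m] has a 2-TC-spanner with at most c·n·m·(log₂ n)·(log₂ m) edges. -/

import Mathlib

/-- There is a directed walk of length at most `k` from `u` to `v` in the digraph
with edge relation `E`. -/
def distLE {V : Type*} (E : V → V → Prop) : ℕ → V → V → Prop
  | 0 => fun u v => u = v
  | n + 1 => fun u v => u = v ∨ ∃ w, E u w ∧ distLE E n w v

/-- `H` is a `k`-transitive-closure-spanner of the digraph `E`: every edge of `H` is an
edge of the transitive closure of `E`, and whenever `E` has a directed path from `u` to `v`,
`H` has one of length at most `k`. -/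
def IsTCSpanner {V : Type*} (E H : V → V → Prop) (k : ℕ) : Prop :=
  (∀ u v, H u v → u ≠ v ∧ Relation.TransGen E u v) ∧
  (∀ u v, Relation.ReflTransGen E u v → distLE H k u v)

/-- The directed grid on `[n] × [m]` (vertices indexed by `Fin n × Fin m`): edges go from
`(i,j)` to `(i+1,j)` and from `(i,j)` to `(i,j+1)`. -/
def gridEdge (n m : ℕ) (x y : Fin n × Fin m) : Prop :=
  ((y.1 : ℕ) = (x.1 : ℕ) + 1 ∧ y.2 = x.2) ∨ (y.1 = x.1 ∧ (y.2 : ℕ) = (x.2 : ℕ) + 1)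

lemma aux_key : ∀ v u : ℕ, u < v → ∃ t, u / 2^t + 1 = v / 2^t := by
  intro v
  induction v using Nat.strong_induction_on with
  | _ v ih =>
    intro u huv
    rcases eq_or_lt_of_le (Nat.div_le_div_right (c := 2) huv.le) with h | h
    · refine ⟨0, ?_⟩
      simp only [pow_zero, Nat.div_one]
      omega
    · obtain ⟨t, ht⟩ := ih (v / 2) (Nat.div_lt_self (by omega) one_lt_two) (u / 2) h
      refine ⟨t + 1, ?_⟩
      have h1 : u / 2 ^ (t+1) = u / 2 / 2 ^ t := by
        rw [Nat.div_div_eq_div_mul, pow_succ, mul_comm]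
      have h2 : v / 2 ^ (t+1) = v / 2 / 2 ^ t := by
        rw [Nat.div_div_eq_div_mul, pow_succ, mul_comm]
      omega

/-- Hub edge relation on the line `Fin n`. -/
def lineS (n : ℕ) (a b : Fin n) : Prop :=
  a = b ∨ (∃ t, (b:ℕ) = ((a:ℕ)/2^t + 1) * 2^t) ∨ (∃ t, (a:ℕ) = ((b:ℕ)/2^t) * 2^t)

lemma aux_lt_up (a t : ℕ) : a < (a / 2^t + 1) * 2^t := by
  have h := Nat.div_add_mod a (2^t)
  have h2 : a % 2^t < 2^t := Nat.mod_lt _ (Nat.pow_pos (by norm_num))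
  nlinarith [Nat.div_mul_le_self a (2^t)]

lemma lineS_le {n : ℕ} {a b : Fin n} (h : lineS n a b) : (a:ℕ) ≤ (b:ℕ) := by
  rcases h with h | ⟨t, ht⟩ | ⟨t, ht⟩
  · exact h ▸ le_refl _
  · exact ht ▸ (aux_lt_up a t).le
  · exact ht ▸ Nat.div_mul_le_self _ _

lemma lineS_refl {n : ℕ} (a : Fin n) : lineS n a a := Or.inl rfl

lemma lineHub {n : ℕ} (a b : Fin n) (hab : a ≤ b) :
    ∃ h : Fin n, lineS n a h ∧ lineS n h b := by
  rcases eq_or_lt_of_le hab with h | h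
  · exact ⟨a, lineS_refl a, h ▸ lineS_refl a⟩
  · obtain ⟨t, ht⟩ := aux_key (b:ℕ) (a:ℕ) h
    have hle : ((a:ℕ)/2^t + 1) * 2^t ≤ (b:ℕ) := by
      rw [ht]; exact Nat.div_mul_le_self _ _
    refine ⟨⟨((a:ℕ)/2^t + 1) * 2^t, lt_of_le_of_lt hle b.isLt⟩, ?_, ?_⟩
    · exact Or.inr (Or.inl ⟨t, rfl⟩)
    · exact Or.inr (Or.inr ⟨t, by simp [ht]⟩)

section Grid
variable {n m : ℕ}

lemma grid_mono {u v : Fin n × Fin m} (h : Relation.ReflTransGen (gridEdge n m) u v) :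
    (u.1:ℕ) ≤ v.1 ∧ (u.2:ℕ) ≤ v.2 := by
  induction h with
  | refl => exact ⟨le_refl _, le_refl _⟩
  | tail _ h ih =>
    obtain ⟨ih1, ih2⟩ := ih
    rcases h with ⟨h1, h2⟩ | ⟨h1, h2⟩
    · have h2' := congrArg Fin.val h2
      exact ⟨by omega, by omega⟩
    · have h1' := congrArg Fin.val h1
      exact ⟨by omega, by omega⟩

lemma grid_reach1 (b : Fin m) : ∀ (d : ℕ) (a a' : Fin n), (a:ℕ) + d = (a':ℕ) →
    Relation.ReflTransGen (gridEdge n m) (a, b) (a', b) := by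
  intro d
  induction d with
  | zero => intro a a' h; have : a = a' := Fin.ext (by omega); exact this ▸ .refl
  | succ d ih =>
    intro a a' h
    have hlt : (a:ℕ) + 1 < n := by have := a'.isLt; omega
    refine Relation.ReflTransGen.head (b := (⟨(a:ℕ)+1, hlt⟩, b)) (Or.inl ⟨rfl, rfl⟩) ?_
    exact ih _ _ (by simpa using by omega)

lemma grid_reach2 (a : Fin n) : ∀ (d : ℕ) (b b' : Fin m), (b:ℕ) + d = (b':ℕ) →
    Relation.ReflTransGen (gridEdge n m) (a, b) (a, b') := by
  intro d
  induction d with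
  | zero => intro b b' h; have : b = b' := Fin.ext (by omega); exact this ▸ .refl
  | succ d ih =>
    intro b b' h
    have hlt : (b:ℕ) + 1 < m := by have := b'.isLt; omega
    refine Relation.ReflTransGen.head (b := (a, ⟨(b:ℕ)+1, hlt⟩)) (Or.inr ⟨rfl, rfl⟩) ?_
    exact ih _ _ (by simpa using by omega)

lemma grid_reach {u v : Fin n × Fin m} (h1 : (u.1:ℕ) ≤ v.1) (h2 : (u.2:ℕ) ≤ v.2) :
    Relation.ReflTransGen (gridEdge n m) u v := by
  have r1 : Relation.ReflTransGen (gridEdge n m) (u.1, u.2) (v.1, u.2) :=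
    grid_reach1 u.2 ((v.1:ℕ) - u.1) u.1 v.1 (by omega)
  have r2 : Relation.ReflTransGen (gridEdge n m) (v.1, u.2) (v.1, v.2) :=
    grid_reach2 v.1 ((v.2:ℕ) - u.2) u.2 v.2 (by omega)
  exact r1.trans r2

/-- The 2-TC-spanner. -/
def gridH (n m : ℕ) (u v : Fin n × Fin m) : Prop :=
  u ≠ v ∧ lineS n u.1 v.1 ∧ lineS m u.2 v.2

lemma gridH_spanner : IsTCSpanner (gridEdge n m) (gridH n m) 2 := by
  constructor
  · rintro u v ⟨hne, h1, h2⟩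
    refine ⟨hne, ?_⟩
    have := grid_reach (lineS_le h1) (lineS_le h2)
    rcases Relation.reflTransGen_iff_eq_or_transGen.1 this with h | h
    · exact absurd h.symm hne
    · exact h
  · intro u v h
    obtain ⟨h1, h2⟩ := grid_mono h
    by_cases huv : u = v
    · exact Or.inl huv
    obtain ⟨c1, hc1, hc1'⟩ := lineHub u.1 v.1 (by exact_mod_cast h1)
    obtain ⟨c2, hc2, hc2'⟩ := lineHub u.2 v.2 (by exact_mod_cast h2)
    by_cases hu : (c1, c2) = u
    · refine Or.inr ⟨v, ⟨huv, ?_, ?_⟩, Or.inl rfl⟩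
      · have : c1 = u.1 := congrArg Prod.fst hu
        exact this ▸ hc1'
      · have : c2 = u.2 := congrArg Prod.snd hu
        exact this ▸ hc2'
    by_cases hv : (c1, c2) = v
    · refine Or.inr ⟨v, ⟨huv, ?_, ?_⟩, Or.inl rfl⟩
      · have : c1 = v.1 := congrArg Prod.fst hv
        exact this ▸ hc1
      · have : c2 = v.2 := congrArg Prod.snd hv
        exact this ▸ hc2
    · exact Or.inr ⟨(c1, c2), ⟨fun e => hu e.symm, hc1, hc2⟩,
        Or.inr ⟨v, ⟨hv, hc1', hc2'⟩, rfl⟩⟩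

end Grid

/-- Counting: the line hub relation has at most `n * (2 * log₂ n + 4)` pairs. -/
lemma lineS_card (n : ℕ) (hn : 2 ≤ n) :
    ({p : Fin n × Fin n | lineS n p.1 p.2}).ncard ≤ n * (2 * Nat.log 2 n + 4) := by
  set L := Nat.log 2 n with hL
  have hn0 : n ≠ 0 := by omega
  -- the three pieces
  set D : Set (Fin n × Fin n) := Set.range (fun a : Fin n => (a, a)) with hD
  set U : Set (Fin n × Fin n) := Set.range (fun q : Fin n × Fin (L+1) =>
    (q.1, if h : ((q.1:ℕ)/2^(q.2:ℕ) + 1) * 2^(q.2:ℕ) < n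
      then (⟨_, h⟩ : Fin n) else q.1)) with hU
  set W : Set (Fin n × Fin n) := Set.range (fun q : Fin n × Fin (L+2) =>
    ((⟨((q.1:ℕ)/2^(q.2:ℕ)) * 2^(q.2:ℕ),
        lt_of_le_of_lt (Nat.div_mul_le_self _ _) q.1.isLt⟩ : Fin n), q.1)) with hW
  have hsub : {p : Fin n × Fin n | lineS n p.1 p.2} ⊆ D ∪ U ∪ W := by
    rintro ⟨a, b⟩ (h | ⟨t, ht⟩ | ⟨t, ht⟩)
    · replace h : a = b := h
      exact Or.inl (Or.inl ⟨a, by rw [h]⟩)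
    · replace ht : (b:ℕ) = ((a:ℕ)/2^t + 1) * 2^t := ht
      refine Or.inl (Or.inr ?_)
      have hbn : ((a:ℕ)/2^t + 1) * 2^t < n := ht ▸ b.isLt
      have htL : t ≤ L := (Nat.le_log_iff_pow_le one_lt_two hn0).2
        (le_trans (Nat.le_mul_of_pos_left _ (Nat.succ_pos _)) hbn.le)
      refine ⟨(a, ⟨t, by omega⟩), ?_⟩
      simp only [dif_pos hbn]
      exact Prod.ext rfl (Fin.ext ht.symm)
    · replace ht : (a:ℕ) = ((b:ℕ)/2^t) * 2^t := ht
      refine Or.inr ?_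
      have hb2 : (b:ℕ) < 2^(L+1) := lt_of_lt_of_le b.isLt (Nat.lt_pow_succ_log_self one_lt_two n).le
      set t' := min t (L+1) with ht'
      have hdd : ((b:ℕ)/2^t') * 2^t' = ((b:ℕ)/2^t) * 2^t := by
        rcases le_or_gt t (L+1) with hc | hc
        · rw [ht', min_eq_left hc]
        · have e1 : (b:ℕ)/2^t = 0 := Nat.div_eq_of_lt
            (lt_of_lt_of_le hb2 (Nat.pow_le_pow_right (by norm_num) hc.le))
          have e2 : (b:ℕ)/2^t' = 0 := Nat.div_eq_of_lt
            (by rw [ht', min_eq_right hc.le]; exact hb2)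
          rw [e1, e2]; ring
      refine ⟨(b, ⟨t', by omega⟩), Prod.ext (Fin.ext ?_) rfl⟩
      show ((b:ℕ)/2^(t':ℕ))*2^(t':ℕ) = (a:ℕ)
      rw [hdd]; exact ht.symm
  calc ({p : Fin n × Fin n | lineS n p.1 p.2}).ncard
      ≤ (D ∪ U ∪ W).ncard := Set.ncard_le_ncard hsub (Set.toFinite _)
    _ ≤ (D ∪ U).ncard + W.ncard := Set.ncard_union_le _ _
    _ ≤ D.ncard + U.ncard + W.ncard := by
        have := Set.ncard_union_le D U; omega
    _ ≤ n + n * (L+1) + n * (L+2) := by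
        have hd : D.ncard ≤ n := by
          rw [hD, ← Set.image_univ]
          calc (Set.image _ _).ncard ≤ (Set.univ : Set (Fin n)).ncard := Set.ncard_image_le
          _ = n := by rw [Set.ncard_univ]; simp
        have hu : U.ncard ≤ n * (L+1) := by
          rw [hU, ← Set.image_univ]
          calc (Set.image _ _).ncard ≤ (Set.univ : Set (Fin n × Fin (L+1))).ncard :=
            Set.ncard_image_le
          _ = n * (L+1) := by rw [Set.ncard_univ]; simp
        have hw : W.ncard ≤ n * (L+2) := by
          rw [hW, ← Set.image_univ]
          calc (Set.image _ _).ncard ≤ (Set.univ : Set (Fin n × Fin (L+2))).ncard :=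
            Set.ncard_image_le
          _ = n * (L+2) := by rw [Set.ncard_univ]; simp
        omega
    _ ≤ n * (2 * L + 4) := by ring_nf; omega

lemma gridH_card (n m : ℕ) (hn : 2 ≤ n) (hm : 2 ≤ m) :
    ({p : (Fin n × Fin m) × (Fin n × Fin m) | gridH n m p.1 p.2}).ncard ≤
      (n * (2 * Nat.log 2 n + 4)) * (m * (2 * Nat.log 2 m + 4)) := by
  set S1 := {p : Fin n × Fin n | lineS n p.1 p.2}
  set S2 := {p : Fin m × Fin m | lineS m p.1 p.2}
  set e : (Fin n × Fin n) × (Fin m × Fin m) → (Fin n × Fin m) × (Fin n × Fin m) :=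
    fun q => ((q.1.1, q.2.1), (q.1.2, q.2.2)) with he
  have hinj : Function.Injective e := by
    rintro ⟨⟨a, b⟩, ⟨c, d⟩⟩ ⟨⟨a', b'⟩, ⟨c', d'⟩⟩ h
    simp only [he, Prod.mk.injEq] at h
    obtain ⟨⟨h1, h2⟩, h3, h4⟩ := h
    simp_all
  have hsub : {p : (Fin n × Fin m) × (Fin n × Fin m) | gridH n m p.1 p.2} ⊆
      e '' (S1 ×ˢ S2) := by
    rintro ⟨⟨a, c⟩, ⟨b, d⟩⟩ ⟨hne, h1, h2⟩
    exact ⟨((a, b), (c, d)), ⟨h1, h2⟩, rfl⟩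
  calc ({p : (Fin n × Fin m) × (Fin n × Fin m) | gridH n m p.1 p.2}).ncard
      ≤ (e '' (S1 ×ˢ S2)).ncard := Set.ncard_le_ncard hsub (Set.toFinite _)
    _ = (S1 ×ˢ S2).ncard := Set.ncard_image_of_injective _ hinj
    _ = S1.ncard * S2.ncard := by
        rw [← Nat.card_coe_set_eq, ← Nat.card_coe_set_eq, ← Nat.card_coe_set_eq]
        rw [Nat.card_congr (Equiv.Set.prod S1 S2), Nat.card_prod]
    _ ≤ _ := Nat.mul_le_mul (lineS_card n hn) (lineS_card m hm)

lemma aux_log_le (n : ℕ) (hn : 2 ≤ n) :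
    (2 * Nat.log 2 n + 4 : ℝ) ≤ 6 * Real.logb 2 n := by
  have h1 : (1:ℝ) ≤ Real.logb 2 n := by
    rw [show (1:ℝ) = Real.logb 2 2 by simp]
    exact Real.logb_le_logb_of_le one_lt_two (by norm_num) (by exact_mod_cast hn)
  have h2 : (Nat.log 2 n : ℝ) ≤ Real.logb 2 n := by
    have hp : (2:ℝ)^(Nat.log 2 n) ≤ n := by
      exact_mod_cast Nat.pow_log_le_self 2 (by omega)
    calc (Nat.log 2 n : ℝ) = Real.logb 2 (2^(Nat.log 2 n)) := by
          rw [Real.logb_pow]; simp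
      _ ≤ Real.logb 2 n := Real.logb_le_logb_of_le one_lt_two (by positivity) hp
  linarith


/-- There is a constant `c` such that the directed `[n] × [m]` grid has a 2-TC-spanner with
at most `c · n · m · (log₂ n) · (log₂ m)` edges. -/
theorem stmt13 :
    ∃ c : ℝ, ∀ n m : ℕ, 2 ≤ n → 2 ≤ m →
      ∃ H : (Fin n × Fin m) → (Fin n × Fin m) → Prop,
        IsTCSpanner (gridEdge n m) H 2 ∧
        (({p : (Fin n × Fin m) × (Fin n × Fin m) | H p.1 p.2}).ncard : ℝ) ≤
          c * n * m * Real.logb 2 n * Real.logb 2 m := by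

  refine ⟨36, fun n m hn hm => ⟨gridH n m, gridH_spanner, ?_⟩⟩
  have hc := gridH_card n m hn hm
  have hln := aux_log_le n hn
  have hlm := aux_log_le m hm
  have hn0 : (0:ℝ) ≤ n := by positivity
  have hm0 : (0:ℝ) ≤ m := by positivity
  calc (({p : (Fin n × Fin m) × (Fin n × Fin m) | gridH n m p.1 p.2}).ncard : ℝ)
      ≤ ((n * (2 * Nat.log 2 n + 4)) * (m * (2 * Nat.log 2 m + 4)) : ℕ) := by exact_mod_cast hc
    _ = (n : ℝ) * (2 * Nat.log 2 n + 4) * ((m:ℝ) * (2 * Nat.log 2 m + 4)) := by push_cast; ring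
    _ ≤ (n : ℝ) * (6 * Real.logb 2 n) * ((m:ℝ) * (6 * Real.logb 2 m)) := by
        apply mul_le_mul
        · exact mul_le_mul_of_nonneg_left hln hn0
        · exact mul_le_mul_of_nonneg_left hlm hm0
        · positivity
        · nlinarith
    _ = 36 * n * m * Real.logb 2 n * Real.logb 2 m := by ring
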